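/- Key step of Lemma 3: let (Ω, F, P) be a probability space with a filtration F_0 ⊆ F_1 ⊆ … ⊆ F_{T−1}, let λ_1,…,λ_T : Ω → ℝ² be integrable random vectors with ‖λ_t‖_∞ ≤ B almost surely, each λ_t independent of F_{t−1} and all with the same mean vector μ = E[λ_t] ∈ ℝ². Let θ_1,…,θ_T : Ω → Δ₂ be such that θ_t is F_{t−1}-measurable, and let θ* ∈ Δ₂ satisfy ⟨θ*, μ⟩ = max_{θ∈Δ₂} ⟨θ, μ⟩. Then E[ Σ_{t=1}^T ⟨θ_t − θ*, λ_t⟩ ] ≤ 0. -/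

import Mathlib

open Finset MeasureTheory ProbabilityTheory

/-- **Key step of Lemma 3.**
If `λ t` are integrable `ℝ²`-valued random vectors bounded by `B`, each independent of
`ℱ (t−1)` and all with common mean `μ`, the weights `θ t` are `ℱ (t−1)`-measurable and
take values in the simplex `Δ₂`, and `θ⋆ ∈ Δ₂` maximizes `⟨·, μ⟩` over `Δ₂`, then
`E[ Σ_t ⟨θ t − θ⋆, λ t⟩ ] ≤ 0`. -/
theorem key_step_lemma3
    (T : ℕ) (B : ℝ)
    (Ω : Type) [m : MeasurableSpace Ω] (P : Measure Ω) [IsProbabilityMeasure P]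
    (ℱ : Filtration ℕ m)
    (lam : ℕ → Ω → Fin 2 → ℝ)
    (hmeas : ∀ t ∈ Finset.Icc 1 T, Measurable (lam t))
    (hint : ∀ t ∈ Finset.Icc 1 T, ∀ i, Integrable (fun ω => lam t ω i) P)
    (hbdd : ∀ t ∈ Finset.Icc 1 T, ∀ᵐ ω ∂P, ∀ i, |lam t ω i| ≤ B)
    (hindep : ∀ t ∈ Finset.Icc 1 T,
      Indep (MeasurableSpace.comap (lam t) inferInstance) (ℱ (t - 1)) P)
    (μ : Fin 2 → ℝ)
    (hmean : ∀ t ∈ Finset.Icc 1 T, ∀ i, (∫ ω, lam t ω i ∂P) = μ i)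
    (θ : ℕ → Ω → Fin 2 → ℝ)
    (hθmeas : ∀ t ∈ Finset.Icc 1 T, Measurable[ℱ (t - 1)] (θ t))
    (hθsimplex : ∀ t ∈ Finset.Icc 1 T, ∀ ω, θ t ω ∈ stdSimplex ℝ (Fin 2))
    (θs : Fin 2 → ℝ) (hθs : θs ∈ stdSimplex ℝ (Fin 2))
    (hθsopt : ∀ ϑ ∈ stdSimplex ℝ (Fin 2), ∑ i, ϑ i * μ i ≤ ∑ i, θs i * μ i) :
    (∫ ω, ∑ t ∈ Finset.Icc 1 T, ∑ i, (θ t ω i - θs i) * lam t ω i ∂P) ≤ 0 := by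
  -- bounds on θ
  have hθbd : ∀ t ∈ Finset.Icc 1 T, ∀ ω i, 0 ≤ θ t ω i ∧ θ t ω i ≤ 1 := by
    intro t ht ω i
    obtain ⟨hnn, hsum⟩ := hθsimplex t ht ω
    refine ⟨hnn i, ?_⟩
    calc θ t ω i ≤ ∑ j, θ t ω j :=
          Finset.single_le_sum (fun j _ => hnn j) (Finset.mem_univ i)
      _ = 1 := hsum
  -- measurability of θ components
  have hθm : ∀ t ∈ Finset.Icc 1 T, ∀ i, Measurable (fun ω => θ t ω i) := by
    intro t ht i
    exact ((measurable_pi_apply i).comp ((hθmeas t ht).mono (ℱ.le _) le_rfl))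
  -- integrability of θ components
  have hθint : ∀ t ∈ Finset.Icc 1 T, ∀ i, Integrable (fun ω => θ t ω i) P := by
    intro t ht i
    refine Integrable.mono' (integrable_const (1 : ℝ)) (hθm t ht i).aestronglyMeasurable ?_
    filter_upwards with ω
    rw [Real.norm_eq_abs, abs_of_nonneg (hθbd t ht ω i).1]
    exact (hθbd t ht ω i).2
  -- independence of components
  have hIF : ∀ t ∈ Finset.Icc 1 T, ∀ i,
      IndepFun (fun ω => θ t ω i) (fun ω => lam t ω i) P := by
    intro t ht i
    have h1 : MeasurableSpace.comap (fun ω => θ t ω i) inferInstance ≤ ℱ (t - 1) :=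
      ((measurable_pi_apply i).comp (hθmeas t ht)).comap_le
    have h2 : MeasurableSpace.comap (fun ω => lam t ω i) inferInstance ≤
        MeasurableSpace.comap (lam t) inferInstance := by
      have : Measurable[MeasurableSpace.comap (lam t) inferInstance]
          (fun ω => lam t ω i) :=
        (measurable_pi_apply i).comp (Measurable.of_comap_le le_rfl)
      exact this.comap_le
    exact indep_of_indep_of_le_left (indep_of_indep_of_le_right (hindep t ht).symm h2) h1
  -- product integral factorization
  have hprod : ∀ t ∈ Finset.Icc 1 T, ∀ i,
      (∫ ω, θ t ω i * lam t ω i ∂P) = (∫ ω, θ t ω i ∂P) * μ i := by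
    intro t ht i
    have := (hIF t ht i).integral_mul_eq_mul_integral (hθm t ht i).aestronglyMeasurable
      ((hmeas t ht).eval.aestronglyMeasurable)
    simpa [Pi.mul_apply, hmean t ht i] using this
  -- integrability of products
  have hprodint : ∀ t ∈ Finset.Icc 1 T, ∀ i,
      Integrable (fun ω => θ t ω i * lam t ω i) P := by
    intro t ht i
    refine (hint t ht i).bdd_mul (hθm t ht i).aestronglyMeasurable (c := 1) (Filter.Eventually.of_forall fun ω => ?_)
    rw [Real.norm_eq_abs, abs_of_nonneg (hθbd t ht ω i).1]
    exact (hθbd t ht ω i).2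
  have hsummandint : ∀ t ∈ Finset.Icc 1 T, ∀ i,
      Integrable (fun ω => (θ t ω i - θs i) * lam t ω i) P := by
    intro t ht i
    have : (fun ω => (θ t ω i - θs i) * lam t ω i)
        = fun ω => θ t ω i * lam t ω i - θs i * lam t ω i := by
      funext ω; ring
    rw [this]
    exact (hprodint t ht i).sub ((hint t ht i).const_mul _)
  -- swap integral and sums
  rw [integral_finset_sum _ (fun t ht =>
    integrable_finset_sum _ (fun i _ => hsummandint t ht i))]
  refine Finset.sum_nonpos fun t ht => ?_
  rw [integral_finset_sum _ (fun i _ => hsummandint t ht i)]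
  -- compute each inner integral
  have hterm : ∀ i, (∫ ω, (θ t ω i - θs i) * lam t ω i ∂P)
      = (∫ ω, θ t ω i ∂P) * μ i - θs i * μ i := by
    intro i
    have heq : (fun ω => (θ t ω i - θs i) * lam t ω i)
        = fun ω => θ t ω i * lam t ω i - θs i * lam t ω i := by
      funext ω; ring
    rw [heq, integral_sub (hprodint t ht i) ((hint t ht i).const_mul _),
      hprod t ht i, integral_const_mul, hmean t ht i]
  simp only [hterm]
  rw [Finset.sum_sub_distrib, sub_nonpos]
  -- the expected θ lies in the simplex
  refine hθsopt _ ⟨fun i => integral_nonneg fun ω => (hθbd t ht ω i).1, ?_⟩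
  rw [← integral_finset_sum _ (fun i _ => hθint t ht i)]
  have : (fun ω => ∑ i, θ t ω i) = fun _ => (1 : ℝ) := by
    funext ω; exact (hθsimplex t ht ω).2
  rw [this]
  simp
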